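/- Fix z ∈ ℝ^d, r > 0, s > 0, and let F_z = { x ↦ sig_s(r² − ‖x − c‖²) : ‖c − z‖ = r }. There is a constant C > 0 (depending only on r and s) such that for every probability measure P on ℝ^d and every n ≥ 1, the Rademacher complexity satisfies R_{P,n}(F_z) ≤ C·√(d/n). -/

import Mathlib

open MeasureTheory


/-- The uniform measure on `{±1}` signs, encoded on `Bool`. -/
noncomputable def signMeasure : Measure Bool := (PMF.uniformOfFintype Bool).toMeasure

/-- The Rademacher complexity `R_{P,n}(F) = E[ sup_{f ∈ F} (1/n) Σᵢ σᵢ f(Xᵢ) ]`, where the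
`Xᵢ` are i.i.d. with law `P` and the `σᵢ` are independent uniform `±1` signs. -/
noncomputable def radComp {E : Type*} [MeasurableSpace E] (P : Measure E) (n : ℕ)
    (F : Set (E → ℝ)) : ℝ :=
  ∫ x : Fin n → E, ∫ σ : Fin n → Bool,
      (⨆ f : F, (n : ℝ)⁻¹ * ∑ i, (if σ i then (1 : ℝ) else -1) * (f : E → ℝ) (x i))
    ∂(Measure.pi fun _ => signMeasure) ∂(Measure.pi fun _ => P)

/-- The sigmoid function with scale `s`. -/
noncomputable def sig (s t : ℝ) : ℝ := 1 / (1 + Real.exp (-t / s))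

/-- The class `F_z = { x ↦ sig_s(r² − ‖x − c‖²) : ‖c − z‖ = r }`. -/
def Fz (d : ℕ) (r s : ℝ) (z : EuclideanSpace ℝ (Fin d)) :
    Set (EuclideanSpace ℝ (Fin d) → ℝ) :=
  {f | ∃ c : EuclideanSpace ℝ (Fin d), ‖c - z‖ = r ∧
    f = fun x => sig s (r ^ 2 - ‖x - c‖ ^ 2)}



lemma sig_nonneg (s t : ℝ) : 0 ≤ sig s t := by
  unfold sig; positivity

lemma sig_le_one (s t : ℝ) : sig s t ≤ 1 := by
  unfold sig
  rw [div_le_one (by positivity)]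
  nlinarith [Real.exp_pos (-t/s)]

lemma sig_abs_le (s t : ℝ) : |sig s t| ≤ 1 := by
  rw [abs_le]; exact ⟨by linarith [sig_nonneg s t], sig_le_one s t⟩

lemma sig_eq (s a b : ℝ) :
    sig s a - sig s b
      = (Real.exp (-b/s) - Real.exp (-a/s)) /
        ((1 + Real.exp (-a/s)) * (1 + Real.exp (-b/s))) := by
  unfold sig
  have ha := Real.exp_pos (-a/s); have hb := Real.exp_pos (-b/s)
  field_simp
  try ring

lemma exp_neg_div_mono {s : ℝ} (hs : 0 < s) {a b : ℝ} (hba : b ≤ a) :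
    Real.exp (-a/s) ≤ Real.exp (-b/s) :=
  Real.exp_le_exp.2 (div_le_div_of_nonneg_right (by linarith) hs.le)

lemma sig_mono {s : ℝ} (hs : 0 < s) {a b : ℝ} (hba : b ≤ a) : sig s b ≤ sig s a := by
  unfold sig
  have h := exp_neg_div_mono hs hba
  have ha := Real.exp_pos (-a/s)
  apply one_div_le_one_div_of_le (by linarith) (by linarith)

-- bound (i)
lemma sig_diff_le₁ {s : ℝ} (hs : 0 < s) {a b : ℝ} (hba : b ≤ a) :
    sig s a - sig s b ≤ (a - b) / s := by
  have ha := Real.exp_pos (-a/s); have hb := Real.exp_pos (-b/s)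
  have h := exp_neg_div_mono hs hba
  rw [sig_eq]
  have hden : Real.exp (-b/s) ≤ (1 + Real.exp (-a/s)) * (1 + Real.exp (-b/s)) := by
    nlinarith
  have h1 : (Real.exp (-b/s) - Real.exp (-a/s)) /
      ((1 + Real.exp (-a/s)) * (1 + Real.exp (-b/s)))
      ≤ (Real.exp (-b/s) - Real.exp (-a/s)) / Real.exp (-b/s) :=
    div_le_div_of_nonneg_left (by linarith) hb hden |>.trans_eq rfl
  refine h1.trans ?_
  have h2 : (Real.exp (-b/s) - Real.exp (-a/s)) / Real.exp (-b/s)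
      = 1 - Real.exp (-((a-b)/s)) := by
    have hx : Real.exp (-((a-b)/s)) = Real.exp (-a/s) / Real.exp (-b/s) := by
      rw [← Real.exp_sub]; ring_nf
    rw [hx]; field_simp
  rw [h2]
  have := Real.add_one_le_exp (-((a-b)/s))
  linarith

-- bound (ii)
lemma sig_diff_le₂ {s : ℝ} (hs : 0 < s) {a b m : ℝ} (hba : b ≤ a) (ham : a ≤ m) :
    sig s a - sig s b ≤ Real.exp (m / s) * ((a - b) / s) := by
  have ha := Real.exp_pos (-a/s); have hb := Real.exp_pos (-b/s)
  rw [sig_eq]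
  have hden : Real.exp (-a/s) * Real.exp (-b/s)
      ≤ (1 + Real.exp (-a/s)) * (1 + Real.exp (-b/s)) := by nlinarith
  have h := exp_neg_div_mono hs hba
  have h1 : (Real.exp (-b/s) - Real.exp (-a/s)) /
      ((1 + Real.exp (-a/s)) * (1 + Real.exp (-b/s)))
      ≤ (Real.exp (-b/s) - Real.exp (-a/s)) / (Real.exp (-a/s) * Real.exp (-b/s)) :=
    div_le_div_of_nonneg_left (by linarith) (by positivity) hden
  refine h1.trans ?_
  have h2 : (Real.exp (-b/s) - Real.exp (-a/s)) / (Real.exp (-a/s) * Real.exp (-b/s))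
      = Real.exp (a/s) - Real.exp (b/s) := by
    have hA : Real.exp (-a/s) = (Real.exp (a/s))⁻¹ := by rw [← Real.exp_neg]; ring_nf
    have hB : Real.exp (-b/s) = (Real.exp (b/s))⁻¹ := by rw [← Real.exp_neg]; ring_nf
    rw [hA, hB]
    have := Real.exp_pos (a/s); have := Real.exp_pos (b/s)
    field_simp
  rw [h2]
  -- exp(a/s) - exp(b/s) ≤ exp(a/s)*((a-b)/s) ≤ exp(m/s)*((a-b)/s)
  have key : Real.exp (a/s) - Real.exp (b/s) ≤ Real.exp (a/s) * ((a-b)/s) := by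
    have h3 : Real.exp (b/s) = Real.exp (a/s) * Real.exp (b/s - a/s) := by
      rw [← Real.exp_add]; ring_nf
    have h4 := Real.add_one_le_exp (b/s - a/s)
    have h5 := mul_le_mul_of_nonneg_left h4 (Real.exp_pos (a/s)).le
    have hd : (a-b)/s = a/s - b/s := by ring
    nlinarith [Real.exp_pos (a/s)]
  refine key.trans ?_
  have h6 : Real.exp (a/s) ≤ Real.exp (m/s) :=
    Real.exp_le_exp.2 (div_le_div_of_nonneg_right ham hs.le)
  have hab : 0 ≤ (a-b)/s := div_nonneg (by linarith) hs.le
  nlinarith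

lemma sig_lip {s : ℝ} (hs : 0 < s) {a b m : ℝ} (ha : a ≤ m) (hb : b ≤ m) :
    |sig s a - sig s b| ≤ (2 / s) * min 1 (Real.exp (m / s)) * (|a - b| / 2) := by
  have key : ∀ u v : ℝ, v ≤ u → u ≤ m →
      sig s u - sig s v ≤ (2/s) * min 1 (Real.exp (m/s)) * ((u - v)/2) := by
    intro u v huv hum
    have h1 := sig_diff_le₁ hs huv
    have h2 := sig_diff_le₂ hs huv (m := m) hum
    rcases min_cases (1:ℝ) (Real.exp (m/s)) with ⟨hmin, _⟩ | ⟨hmin, _⟩ <;> rw [hmin]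
    · calc sig s u - sig s v ≤ (u - v)/s := h1
        _ = (2/s) * 1 * ((u-v)/2) := by ring
    · calc sig s u - sig s v ≤ Real.exp (m/s) * ((u-v)/s) := h2
        _ = (2/s) * Real.exp (m/s) * ((u-v)/2) := by ring
  rcases le_total b a with h | h
  · rw [abs_of_nonneg (by linarith [sig_mono hs h]), abs_of_nonneg (by linarith)]
    exact key a b h ha
  · rw [abs_of_nonpos (by linarith [sig_mono hs h]), abs_of_nonpos (by linarith)]
    simpa using key b a h hb


open Finset

def sgn (b : Bool) : ℝ := if b then (1:ℝ) else -1

lemma sgn_abs (b : Bool) : |sgn b| = 1 := by cases b <;> simp [sgn]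

lemma sgn_true : sgn true = 1 := rfl
lemma sgn_false : sgn false = -1 := rfl

section twoPoint

lemma bdd_of_abs_le {T : Type*} {f : T → ℝ} {M : ℝ} (h : ∀ t, |f t| ≤ M) :
    BddAbove (Set.range f) :=
  ⟨M, by rintro x ⟨t, rfl⟩; exact (abs_le.1 (h t)).2⟩

lemma two_point {T : Type*} [Nonempty T] (A F G : T → ℝ) (MA M : ℝ)
    (hA : ∀ t, |A t| ≤ MA) (hF : ∀ t, |F t| ≤ M) (hG : ∀ t, |G t| ≤ M)
    (hlip : ∀ t t', F t - F t' ≤ |G t - G t'|) :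
    (⨆ t, A t + F t) + (⨆ t, A t - F t)
      ≤ (⨆ t, A t + G t) + (⨆ t, A t - G t) := by
  have bd : ∀ (H : T → ℝ), (∀ t, |H t| ≤ M) → BddAbove (Set.range fun t => A t + H t) ∧
      BddAbove (Set.range fun t => A t - H t) := by
    intro H hH
    constructor <;> apply bdd_of_abs_le (M := MA + M) <;> intro t <;>
      · have := abs_le.1 (hA t); have := abs_le.1 (hH t); rw [abs_le]; constructor <;> linarith
  obtain ⟨bG1, bG2⟩ := bd G hG
  have key : ∀ t t', (A t + F t) + (A t' - F t')
      ≤ (⨆ t, A t + G t) + (⨆ t, A t - G t) := by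
    intro t t'
    rcases abs_cases (G t - G t') with ⟨heq, _⟩ | ⟨heq, _⟩
    · have h := hlip t t'; rw [heq] at h
      calc (A t + F t) + (A t' - F t') ≤ (A t + G t) + (A t' - G t') := by linarith
        _ ≤ _ := add_le_add (le_ciSup bG1 t) (le_ciSup bG2 t')
    · have h := hlip t t'; rw [heq] at h
      calc (A t + F t) + (A t' - F t') ≤ (A t' + G t') + (A t - G t) := by linarith
        _ ≤ _ := add_le_add (le_ciSup bG1 t') (le_ciSup bG2 t)
  have h1 : (⨆ t, A t + F t) ≤ ((⨆ t, A t + G t) + (⨆ t, A t - G t)) - ⨆ t, A t - F t := by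
    apply ciSup_le; intro t
    have h3 : (⨆ t', A t' - F t')
        ≤ ((⨆ t, A t + G t) + (⨆ t, A t - G t)) - (A t + F t) :=
      ciSup_le fun t' => by linarith [key t t']
    linarith
  linarith

end twoPoint

section contraction

variable {ι T : Type*} [Fintype ι] [DecidableEq ι] [Nonempty T]

lemma contraction_step (F G : ι → T → ℝ) (k : ι) (M : ℝ)
    (hFb : ∀ i t, |F i t| ≤ M) (hGb : ∀ i t, |G i t| ≤ M)
    (hFG : ∀ i, i ≠ k → F i = G i)
    (hlip : ∀ t t', F k t - F k t' ≤ |G k t - G k t'|) :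
    ∑ σ : ι → Bool, ⨆ t, ∑ i, sgn (σ i) * F i t
      ≤ ∑ σ : ι → Bool, ⨆ t, ∑ i, sgn (σ i) * G i t := by
  classical
  have hsum : ∀ (H : ι → T → ℝ), ∑ σ : ι → Bool, (⨆ t, ∑ i, sgn (σ i) * H i t)
      = ∑ τ : { j // j ≠ k } → Bool,
          ((⨆ t, (∑ j : { j // j ≠ k }, sgn (τ j) * H j t) + H k t)
            + (⨆ t, (∑ j : { j // j ≠ k }, sgn (τ j) * H j t) - H k t)) := by
    intro H
    rw [← Equiv.sum_comp (Equiv.funSplitAt k Bool).symm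
      (fun σ => ⨆ t, ∑ i, sgn (σ i) * H i t), Fintype.sum_prod_type, Fintype.sum_bool]
    rw [← Finset.sum_add_distrib]
    apply Finset.sum_congr rfl
    intro τ _
    have hval : ∀ (b : Bool) (t : T), (∑ i, sgn ((Equiv.funSplitAt k Bool).symm (b, τ) i) * H i t)
        = (∑ j : { j // j ≠ k }, sgn (τ j) * H j t) + sgn b * H k t := by
      intro b t
      rw [← Finset.sum_erase_add _ _ (Finset.mem_univ k)]
      congr 1
      · rw [Finset.sum_subtype (p := fun j => j ≠ k)
          (Finset.univ.erase k) (fun x => by simp)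
          (fun i => sgn ((Equiv.funSplitAt k Bool).symm (b, τ) i) * H i t)]
        apply Finset.sum_congr rfl
        intro j _
        congr 1
        simp [Equiv.funSplitAt_symm_apply, j.2]
      · congr 1
        simp [Equiv.funSplitAt_symm_apply]
    have e1 : (fun t => ∑ i, sgn ((Equiv.funSplitAt k Bool).symm (true, τ) i) * H i t)
        = fun t => (∑ j : { j // j ≠ k }, sgn (τ j) * H (j : ι) t) + H k t := by
      funext t; rw [hval true t, sgn_true, one_mul]
    have e2 : (fun t => ∑ i, sgn ((Equiv.funSplitAt k Bool).symm (false, τ) i) * H i t)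
        = fun t => (∑ j : { j // j ≠ k }, sgn (τ j) * H (j : ι) t) - H k t := by
      funext t; rw [hval false t, sgn_false, neg_one_mul, ← sub_eq_add_neg]
    rw [e1, e2]
  rw [hsum F, hsum G]
  apply Finset.sum_le_sum
  intro τ _
  have hAeq : ∀ t, (∑ j : { j // j ≠ k }, sgn (τ j) * G (j : ι) t)
      = ∑ j : { j // j ≠ k }, sgn (τ j) * F (j : ι) t := fun t =>
    Finset.sum_congr rfl fun j _ => by rw [hFG j j.2]
  simp only [hAeq]
  exact two_point (fun t => ∑ j : { j // j ≠ k }, sgn (τ j) * F (j : ι) t) (F k) (G k)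
    ((Fintype.card ι : ℝ) * M) M
    (fun t => by
      calc |∑ j : { j // j ≠ k }, sgn (τ j) * F (j : ι) t|
          ≤ ∑ j : { j // j ≠ k }, |sgn (τ j) * F (j : ι) t| := Finset.abs_sum_le_sum_abs _ _
        _ ≤ ∑ _j : { j // j ≠ k }, M := Finset.sum_le_sum fun j _ => by
              rw [abs_mul, sgn_abs, one_mul]; exact hFb _ t
        _ = (Fintype.card { j // j ≠ k } : ℝ) * M := by
              rw [Finset.sum_const, nsmul_eq_mul, Finset.card_univ]
        _ ≤ (Fintype.card ι : ℝ) * M := by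
              have hM : 0 ≤ M := (abs_nonneg _).trans (hFb k t)
              have := Fintype.card_subtype_le (fun j : ι => j ≠ k)
              apply mul_le_mul_of_nonneg_right _ hM
              exact_mod_cast this)
    (fun t => hFb k t) (fun t => hGb k t) hlip

/-- Ledoux–Talagrand contraction, finite uniform-signs version. -/
lemma contraction (f g : ι → T → ℝ) (M : ℝ)
    (hfb : ∀ i t, |f i t| ≤ M) (hgb : ∀ i t, |g i t| ≤ M)
    (hlip : ∀ i t t', |f i t - f i t'| ≤ |g i t - g i t'|) :
    ∑ σ : ι → Bool, ⨆ t, ∑ i, sgn (σ i) * f i t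
      ≤ ∑ σ : ι → Bool, ⨆ t, ∑ i, sgn (σ i) * g i t := by
  classical
  set mix : Finset ι → ι → T → ℝ := fun S i => if i ∈ S then g i else f i with hmix
  have hmb : ∀ (S : Finset ι) i t, |mix S i t| ≤ M := by
    intro S i t; by_cases h : i ∈ S <;> simp [hmix, h, hfb i t, hgb i t]
  have key : ∀ S : Finset ι,
      ∑ σ : ι → Bool, ⨆ t, ∑ i, sgn (σ i) * f i t
        ≤ ∑ σ : ι → Bool, ⨆ t, ∑ i, sgn (σ i) * mix S i t := by
    intro S
    induction S using Finset.induction_on with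
    | empty => simp [hmix]
    | @insert k S hk ih =>
      refine ih.trans ?_
      apply contraction_step (mix S) (mix (insert k S)) k M (hmb S) (hmb (insert k S))
      · intro i hi
        simp only [hmix]
        by_cases h : i ∈ S
        · rw [if_pos h, if_pos (Finset.mem_insert_of_mem h)]
        · rw [if_neg h, if_neg (by simp [Finset.mem_insert, hi, h])]
      · intro t t'
        have h1 : mix S k = f k := by simp [hmix, hk]
        have h2 : mix (insert k S) k = g k := by simp [hmix]
        rw [h1, h2]
        exact (le_abs_self _).trans (hlip k t t')
  have : mix Finset.univ = g := by funext i t; simp [hmix]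
  simpa [this] using key Finset.univ

end contraction

open RealInnerProductSpace in
lemma Kbound {r s t : ℝ} (hr : 0 < r) (hs : 0 < s) (ht : 0 ≤ t) :
    (2/s) * min 1 (Real.exp ((2*r*t - t^2)/s)) * t ≤ 8*r/s + 1/r := by
  have hmin0 : 0 ≤ min 1 (Real.exp ((2*r*t - t^2)/s)) :=
    le_min zero_le_one (Real.exp_pos _).le
  rcases le_total t (4*r) with h | h
  · have h1 : (2/s) * min 1 (Real.exp ((2*r*t - t^2)/s)) * t ≤ (2/s) * 1 * t :=
      mul_le_mul_of_nonneg_right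
        (mul_le_mul_of_nonneg_left (min_le_left _ _) (by positivity)) ht
    have : (2/s) * 1 * t ≤ 8*r/s := by
      rw [mul_one]
      rw [div_mul_eq_mul_div, div_le_div_iff₀ hs hs]
      nlinarith
    have hpos : 0 < 1/r := by positivity
    linarith
  · have ht0 : 0 < t := lt_of_lt_of_le (by positivity) h
    have harg : (2*r*t - t^2)/s ≤ -(t^2/(2*s)) := by
      rw [div_le_iff₀ hs]
      have he : -(t^2/(2*s))*s = -(t^2/2) := by field_simp
      rw [he]
      nlinarith
    have hexp : Real.exp ((2*r*t - t^2)/s) ≤ 2*s/t^2 := by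
      have h1 : Real.exp ((2*r*t - t^2)/s) ≤ Real.exp (-(t^2/(2*s))) :=
        Real.exp_le_exp.2 harg
      have h2 : Real.exp (-(t^2/(2*s))) ≤ 2*s/t^2 := by
        rw [Real.exp_neg]
        have hE : t^2/(2*s) ≤ Real.exp (t^2/(2*s)) := by
          linarith [Real.add_one_le_exp (t^2/(2*s))]
        have h3 := one_div_le_one_div_of_le (by positivity : (0:ℝ) < t^2/(2*s)) hE
        rw [one_div, one_div] at h3
        calc (Real.exp (t^2/(2*s)))⁻¹ ≤ (t^2/(2*s))⁻¹ := h3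
          _ = 2*s/t^2 := by rw [inv_div]
      linarith
    have h1 : (2/s) * min 1 (Real.exp ((2*r*t - t^2)/s)) * t ≤ (2/s) * (2*s/t^2) * t :=
      mul_le_mul_of_nonneg_right
        (mul_le_mul_of_nonneg_left ((min_le_right _ _).trans hexp) (by positivity)) ht0.le
    have h2 : (2/s) * (2*s/t^2) * t = 4/t := by field_simp; ring
    have h3 : 4/t ≤ 1/r := by
      rw [div_le_div_iff₀ ht0 hr]; nlinarith
    have : 0 ≤ 8*r/s := by positivity
    linarith

section orth

open RealInnerProductSpace

variable {ι : Type*} [Fintype ι] [DecidableEq ι]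

lemma sum_sgn_mul (i j : ι) (hij : i ≠ j) :
    ∑ σ : ι → Bool, sgn (σ i) * sgn (σ j) = 0 := by
  classical
  apply Finset.sum_involution (fun σ _ => Function.update σ i (!(σ i)))
  · intro σ _
    have h1 : Function.update σ i (!(σ i)) i = !(σ i) := Function.update_self _ _ _
    have h2 : Function.update σ i (!(σ i)) j = σ j := Function.update_of_ne (Ne.symm hij) _ _
    rw [h1, h2]
    cases σ i <;> cases hj : σ j <;> simp [sgn, hj] <;> ring
  · intro σ _ _
    intro hEq
    have := congrFun hEq i
    rw [Function.update_self] at this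
    cases h : σ i <;> rw [h] at this <;> simp at this
  · intro σ _
    funext j'
    by_cases h : j' = i
    · subst h; simp
    · simp [Function.update_of_ne h]
  · intro σ _; exact Finset.mem_univ _

lemma sum_norm_sq {d : ℕ} (v : ι → EuclideanSpace ℝ (Fin d)) :
    ∑ σ : ι → Bool, ‖∑ i, sgn (σ i) • v i‖^2
      = (Fintype.card (ι → Bool) : ℝ) * ∑ i, ‖v i‖^2 := by
  classical
  have expand : ∀ σ : ι → Bool, ‖∑ i, sgn (σ i) • v i‖^2
      = ∑ i, ∑ j, (sgn (σ i) * sgn (σ j)) * ⟪v i, v j⟫ := by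
    intro σ
    rw [← real_inner_self_eq_norm_sq, sum_inner]
    refine Finset.sum_congr rfl fun i _ => ?_
    rw [inner_sum]
    refine Finset.sum_congr rfl fun j _ => ?_
    rw [real_inner_smul_left, real_inner_smul_right]; ring
  simp only [expand]
  rw [Finset.sum_comm]
  have inner_eq : ∀ i : ι, ∑ σ : ι → Bool, ∑ j, (sgn (σ i) * sgn (σ j)) * ⟪v i, v j⟫
      = (Fintype.card (ι → Bool) : ℝ) * ‖v i‖^2 := by
    intro i
    rw [Finset.sum_comm]
    have hterm : ∀ j : ι, ∑ σ : ι → Bool, (sgn (σ i) * sgn (σ j)) * ⟪v i, v j⟫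
        = (if j = i then (Fintype.card (ι → Bool) : ℝ) * ‖v i‖^2 else 0) := by
      intro j
      by_cases h : j = i
      · subst h
        rw [if_pos rfl]
        have : ∀ σ : ι → Bool, (sgn (σ j) * sgn (σ j)) * ⟪v j, v j⟫ = ‖v j‖^2 := by
          intro σ
          have : sgn (σ j) * sgn (σ j) = 1 := by cases σ j <;> simp [sgn]
          rw [this, one_mul, real_inner_self_eq_norm_sq]
        simp only [this]
        rw [Finset.sum_const, nsmul_eq_mul, Finset.card_univ]
      · rw [if_neg h, ← Finset.sum_mul, sum_sgn_mul i j (fun hEq => h hEq.symm), zero_mul]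
    simp only [hterm]
    rw [Finset.sum_ite_eq' Finset.univ i
      (fun _ => (Fintype.card (ι → Bool) : ℝ) * ‖v i‖^2)]
    rw [if_pos (Finset.mem_univ i)]
  simp only [inner_eq]
  rw [← Finset.mul_sum]

end orth

section core

open RealInnerProductSpace

lemma core_bound (d n : ℕ) (z : EuclideanSpace ℝ (Fin d)) (r s : ℝ)
    (hr : 0 < r) (hs : 0 < s)
    (hT : Nonempty {u : EuclideanSpace ℝ (Fin d) // ‖u‖ = r})
    (x : Fin n → EuclideanSpace ℝ (Fin d)) :
    ∑ σ : Fin n → Bool, ⨆ u : {u : EuclideanSpace ℝ (Fin d) // ‖u‖ = r},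
        ∑ i, sgn (σ i) * sig s (r^2 - ‖x i - (z + (u : EuclideanSpace ℝ (Fin d)))‖^2)
      ≤ (Fintype.card (Fin n → Bool) : ℝ) * ((8*r/s + 1/r) * r * Real.sqrt n) := by
  classical
  set T := {u : EuclideanSpace ℝ (Fin d) // ‖u‖ = r}
  set y : Fin n → EuclideanSpace ℝ (Fin d) := fun i => x i - z with hy
  set B : ℝ := 8*r/s + 1/r with hB
  have hB0 : 0 < B := by positivity
  set K : Fin n → ℝ := fun i => (2/s) * min 1 (Real.exp ((2*r*‖y i‖ - ‖y i‖^2)/s)) with hK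
  have hK0 : ∀ i, 0 ≤ K i := fun i => by
    have : (0:ℝ) ≤ min 1 (Real.exp ((2*r*‖y i‖ - ‖y i‖^2)/s)) :=
      le_min zero_le_one (Real.exp_pos _).le
    positivity
  have hKB : ∀ i, K i * ‖y i‖ ≤ B := fun i => by
    have := Kbound (t := ‖y i‖) hr hs (norm_nonneg _)
    rw [hK, hB]; linarith
  set f : Fin n → T → ℝ :=
    fun i u => sig s (r^2 - ‖x i - (z + (u : EuclideanSpace ℝ (Fin d)))‖^2) with hf
  set g : Fin n → T → ℝ := fun i u => K i * ⟪y i, (u : EuclideanSpace ℝ (Fin d))⟫ with hg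
  -- rewrite the sigmoid argument
  have harg : ∀ (i : Fin n) (u : T),
      r^2 - ‖x i - (z + (u : EuclideanSpace ℝ (Fin d)))‖^2
        = 2*⟪y i, (u : EuclideanSpace ℝ (Fin d))⟫ - ‖y i‖^2 := by
    intro i u
    have h1 : x i - (z + (u : EuclideanSpace ℝ (Fin d)))
        = y i - (u : EuclideanSpace ℝ (Fin d)) := by rw [hy]; exact sub_add_eq_sub_sub _ _ _
    rw [h1, norm_sub_sq_real, u.2]
    ring
  have hfb : ∀ (i : Fin n) (u : T), |f i u| ≤ 1 + B * r := fun i u => by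
    have := sig_abs_le s (r^2 - ‖x i - (z + (u : EuclideanSpace ℝ (Fin d)))‖^2)
    have : (0:ℝ) ≤ B * r := by positivity
    rw [hf]
    calc |sig s _| ≤ 1 := sig_abs_le s _
      _ ≤ 1 + B * r := by linarith
  have hinner : ∀ (i : Fin n) (u : T),
      |⟪y i, (u : EuclideanSpace ℝ (Fin d))⟫| ≤ ‖y i‖ * r := fun i u => by
    have := abs_real_inner_le_norm (y i) (u : EuclideanSpace ℝ (Fin d))
    rw [u.2] at this; exact this
  have hgb : ∀ (i : Fin n) (u : T), |g i u| ≤ 1 + B * r := fun i u => by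
    rw [hg, abs_mul, abs_of_nonneg (hK0 i)]
    calc K i * |⟪y i, (u : EuclideanSpace ℝ (Fin d))⟫|
        ≤ K i * (‖y i‖ * r) := mul_le_mul_of_nonneg_left (hinner i u) (hK0 i)
      _ = (K i * ‖y i‖) * r := by ring
      _ ≤ B * r := mul_le_mul_of_nonneg_right (hKB i) hr.le
      _ ≤ 1 + B * r := by linarith
  have hlip : ∀ (i : Fin n) (u u' : T), |f i u - f i u'| ≤ |g i u - g i u'| := by
    intro i u u'
    rw [hf, hg]
    simp only [harg i u, harg i u']
    have hm : ∀ (v : T), 2*⟪y i, (v : EuclideanSpace ℝ (Fin d))⟫ - ‖y i‖^2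
        ≤ 2*r*‖y i‖ - ‖y i‖^2 := fun v => by
      have h1 := (abs_le.1 (hinner i v)).2
      nlinarith
    have key := sig_lip hs (hm u) (hm u')
    have heq : |(2*⟪y i, (u : EuclideanSpace ℝ (Fin d))⟫ - ‖y i‖^2)
        - (2*⟪y i, (u' : EuclideanSpace ℝ (Fin d))⟫ - ‖y i‖^2)| / 2
        = |⟪y i, (u : EuclideanSpace ℝ (Fin d))⟫ - ⟪y i, (u' : EuclideanSpace ℝ (Fin d))⟫| := by
      rw [show (2*⟪y i, (u : EuclideanSpace ℝ (Fin d))⟫ - ‖y i‖^2)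
        - (2*⟪y i, (u' : EuclideanSpace ℝ (Fin d))⟫ - ‖y i‖^2)
        = 2 * (⟪y i, (u : EuclideanSpace ℝ (Fin d))⟫ - ⟪y i, (u' : EuclideanSpace ℝ (Fin d))⟫)
        from by ring, abs_mul]
      norm_num
    rw [heq] at key
    calc |sig s _ - sig s _|
        ≤ K i * |⟪y i, (u : EuclideanSpace ℝ (Fin d))⟫
            - ⟪y i, (u' : EuclideanSpace ℝ (Fin d))⟫| := key
      _ = |K i * ⟪y i, (u : EuclideanSpace ℝ (Fin d))⟫
            - K i * ⟪y i, (u' : EuclideanSpace ℝ (Fin d))⟫| := by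
          rw [← mul_sub, abs_mul, abs_of_nonneg (hK0 i)]
  have step1 := contraction (T := T) f g (1 + B * r) hfb hgb hlip
  -- bound the linear part
  set v : Fin n → EuclideanSpace ℝ (Fin d) := fun i => K i • y i with hv
  have step2 : ∀ σ : Fin n → Bool,
      (⨆ u : T, ∑ i, sgn (σ i) * g i u) ≤ r * ‖∑ i, sgn (σ i) • v i‖ := by
    intro σ
    apply ciSup_le
    intro u
    have hlin : ∑ i, sgn (σ i) * g i u
        = ⟪∑ i, sgn (σ i) • v i, (u : EuclideanSpace ℝ (Fin d))⟫ := by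
      rw [sum_inner]
      refine Finset.sum_congr rfl fun i _ => ?_
      rw [real_inner_smul_left, hv, real_inner_smul_left, hg]
      try ring
    rw [hlin]
    calc ⟪∑ i, sgn (σ i) • v i, (u : EuclideanSpace ℝ (Fin d))⟫
        ≤ ‖∑ i, sgn (σ i) • v i‖ * ‖(u : EuclideanSpace ℝ (Fin d))‖ :=
          real_inner_le_norm _ _
      _ = r * ‖∑ i, sgn (σ i) • v i‖ := by rw [u.2]; ring
  have hnv : ∀ i, ‖v i‖ ≤ B := fun i => by
    rw [hv, norm_smul, Real.norm_eq_abs, abs_of_nonneg (hK0 i)]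
    exact hKB i
  -- Cauchy–Schwarz over signs
  set N : ℝ := (Fintype.card (Fin n → Bool) : ℝ) with hN
  have hN0 : 0 < N := by
    rw [hN]; exact_mod_cast Fintype.card_pos
  have step3 : ∑ σ : Fin n → Bool, ‖∑ i, sgn (σ i) • v i‖ ≤ N * (B * Real.sqrt n) := by
    have hcs := Finset.sum_mul_sq_le_sq_mul_sq Finset.univ
      (fun σ : Fin n → Bool => ‖∑ i, sgn (σ i) • v i‖) (fun _ => (1:ℝ))
    have hsq : ∑ σ : Fin n → Bool, ‖∑ i, sgn (σ i) • v i‖^2 ≤ N * (n * B^2) := by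
      rw [sum_norm_sq, ← hN]
      apply mul_le_mul_of_nonneg_left _ hN0.le
      calc ∑ i, ‖v i‖^2 ≤ ∑ _i : Fin n, B^2 := Finset.sum_le_sum fun i _ =>
            pow_le_pow_left₀ (norm_nonneg _) (hnv i) 2
        _ = n * B^2 := by rw [Finset.sum_const, nsmul_eq_mul, Finset.card_univ,
            Fintype.card_fin]
    have hsum0 : 0 ≤ ∑ σ : Fin n → Bool, ‖∑ i, sgn (σ i) • v i‖ :=
      Finset.sum_nonneg fun _ _ => norm_nonneg _
    have hcard : ∑ _σ : Fin n → Bool, (1:ℝ)^2 = N := by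
      simp [hN]
    have h2 : (∑ σ : Fin n → Bool, ‖∑ i, sgn (σ i) • v i‖)^2 ≤ N^2 * (n * B^2) := by
      calc (∑ σ : Fin n → Bool, ‖∑ i, sgn (σ i) • v i‖)^2
          = (∑ σ : Fin n → Bool, ‖∑ i, sgn (σ i) • v i‖ * 1)^2 := by simp
        _ ≤ (∑ σ : Fin n → Bool, ‖∑ i, sgn (σ i) • v i‖^2)
              * (∑ _σ : Fin n → Bool, (1:ℝ)^2) := hcs
        _ = (∑ σ : Fin n → Bool, ‖∑ i, sgn (σ i) • v i‖^2) * N := by rw [hcard]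
        _ ≤ (N * (n * B^2)) * N := mul_le_mul_of_nonneg_right hsq hN0.le
        _ = N^2 * (n * B^2) := by ring
    have hrhs0 : 0 ≤ N * (B * Real.sqrt n) := by positivity
    have hrsq : (N * (B * Real.sqrt n))^2 = N^2 * (n * B^2) := by
      rw [mul_pow, mul_pow, Real.sq_sqrt (Nat.cast_nonneg n)]
      ring
    nlinarith
  calc ∑ σ : Fin n → Bool, ⨆ u : T, ∑ i, sgn (σ i) * f i u
      ≤ ∑ σ : Fin n → Bool, ⨆ u : T, ∑ i, sgn (σ i) * g i u := step1
    _ ≤ ∑ σ : Fin n → Bool, r * ‖∑ i, sgn (σ i) • v i‖ :=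
        Finset.sum_le_sum fun σ _ => step2 σ
    _ = r * ∑ σ : Fin n → Bool, ‖∑ i, sgn (σ i) • v i‖ := by rw [← Finset.mul_sum]
    _ ≤ r * (N * (B * Real.sqrt n)) := mul_le_mul_of_nonneg_left step3 hr.le
    _ = N * (B * r * Real.sqrt n) := by ring

end core

open MeasureTheory


section assembly

variable {d : ℕ}

instance : IsProbabilityMeasure signMeasure := PMF.toMeasure.isProbabilityMeasure _

lemma signMeasure_singleton (b : Bool) : signMeasure {b} = 2⁻¹ := by
  rw [signMeasure, PMF.toMeasure_apply_singleton _ _ (measurableSet_singleton _),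
    PMF.uniformOfFintype_apply]
  norm_num

lemma pi_sign_singleton (n : ℕ) (σ : Fin n → Bool) :
    (Measure.pi fun _ : Fin n => signMeasure) {σ} = 2⁻¹ ^ n := by
  rw [← Set.univ_pi_singleton, Measure.pi_pi]
  simp [signMeasure_singleton]

lemma integral_pi_sign (n : ℕ) (ψ : (Fin n → Bool) → ℝ) :
    ∫ σ, ψ σ ∂(Measure.pi fun _ : Fin n => signMeasure)
      = ∑ σ : Fin n → Bool, (2⁻¹ : ℝ)^n * ψ σ := by
  rw [integral_fintype Integrable.of_finite]
  refine Finset.sum_congr rfl fun σ _ => ?_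
  rw [measureReal_def, pi_sign_singleton, smul_eq_mul]
  norm_num

end assembly

section mainProof

open RealInnerProductSpace

/-- The Rademacher complexity of `F_z` is `O(√(d/n))`, with a constant depending only on
`r` and `s`. -/
theorem stmt_11 (d : ℕ) (z : EuclideanSpace ℝ (Fin d)) (r s : ℝ) (hr : 0 < r) (hs : 0 < s) :
    ∃ C > (0 : ℝ), ∀ (P : Measure (EuclideanSpace ℝ (Fin d))), IsProbabilityMeasure P →
      ∀ n : ℕ, 1 ≤ n → radComp P n (Fz d r s z) ≤ C * Real.sqrt (d / n) := by
  classical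
  refine ⟨(8*r/s + 1/r) * r, by positivity, ?_⟩
  intro P hP n hn
  haveI := hP
  have hsqrt0 : 0 ≤ Real.sqrt ((d:ℝ)/n) := Real.sqrt_nonneg _
  have hC0 : 0 < (8*r/s + 1/r) * r := by positivity
  by_cases hd : d = 0
  · subst hd
    have hFz : IsEmpty (Fz 0 r s z) := by
      rw [Set.isEmpty_coe_sort, Set.eq_empty_iff_forall_notMem]
      rintro f ⟨c, hc, -⟩
      have hcz : c - z = 0 := Subsingleton.elim _ _
      rw [hcz, norm_zero] at hc
      exact absurd hc.symm (ne_of_gt hr)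
    have h0 : radComp P n (Fz 0 r s z) = 0 := by
      unfold radComp
      have hz : ∀ (x : Fin n → EuclideanSpace ℝ (Fin 0)) (σ : Fin n → Bool),
          (⨆ f : Fz 0 r s z,
            (n : ℝ)⁻¹ * ∑ i, (if σ i then (1 : ℝ) else -1) * (f : _ → ℝ) (x i)) = 0 :=
        fun x σ => Real.iSup_of_isEmpty _
      simp only [hz, integral_zero]
    rw [h0]
    positivity
  · have hdpos : 0 < d := Nat.pos_of_ne_zero hd
    have hnpos : (0:ℝ) < n := by exact_mod_cast hn
    haveI hT : Nonempty {u : EuclideanSpace ℝ (Fin d) // ‖u‖ = r} :=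
      ⟨⟨EuclideanSpace.single ⟨0, hdpos⟩ r, by
        rw [EuclideanSpace.norm_single, Real.norm_eq_abs, abs_of_pos hr]⟩⟩
    set T := {u : EuclideanSpace ℝ (Fin d) // ‖u‖ = r} with hTdef
    -- the surjection from the sphere onto the function class
    have hmem : ∀ u : T, (fun x => sig s (r^2 - ‖x - (z + (u : EuclideanSpace ℝ (Fin d)))‖^2))
        ∈ Fz d r s z := by
      intro u
      exact ⟨z + (u : EuclideanSpace ℝ (Fin d)), by rw [add_sub_cancel_left]; exact u.2, rfl⟩
    set m : T → Fz d r s z := fun u =>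
      ⟨fun x => sig s (r^2 - ‖x - (z + (u : EuclideanSpace ℝ (Fin d)))‖^2), hmem u⟩ with hm
    have hsurj : Function.Surjective m := by
      rintro ⟨f, c, hc, rfl⟩
      refine ⟨⟨c - z, hc⟩, ?_⟩
      rw [hm]
      apply Subtype.ext
      simp only
      funext x
      rw [add_sub_cancel]
    -- identify the supremum
    have hsup : ∀ (x : Fin n → EuclideanSpace ℝ (Fin d)) (σ : Fin n → Bool),
        (⨆ f : Fz d r s z,
          (n : ℝ)⁻¹ * ∑ i, (if σ i then (1 : ℝ) else -1) * (f : _ → ℝ) (x i))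
        = (n:ℝ)⁻¹ * ⨆ u : T, ∑ i, sgn (σ i)
            * sig s (r^2 - ‖x i - (z + (u : EuclideanSpace ℝ (Fin d)))‖^2) := by
      intro x σ
      rw [Real.mul_iSup_of_nonneg (by positivity)]
      rw [iSup, iSup, ← hsurj.range_comp
        (fun f : Fz d r s z =>
          (n : ℝ)⁻¹ * ∑ i, (if σ i then (1 : ℝ) else -1) * (f : _ → ℝ) (x i))]
      rfl
    -- pointwise (in x) bound for the inner integral
    have hptw : ∀ x : Fin n → EuclideanSpace ℝ (Fin d),
        (∫ σ : Fin n → Bool,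
          (⨆ f : Fz d r s z,
            (n : ℝ)⁻¹ * ∑ i, (if σ i then (1 : ℝ) else -1) * (f : _ → ℝ) (x i))
          ∂(Measure.pi fun _ => signMeasure))
        ≤ (8*r/s + 1/r) * r * Real.sqrt ((d:ℝ)/n) := by
      intro x
      simp only [hsup x]
      rw [integral_pi_sign]
      have hcore := core_bound d n z r s hr hs hT x
      have hfac : ∑ σ : Fin n → Bool, (2⁻¹:ℝ)^n * ((n:ℝ)⁻¹
            * ⨆ u : T, ∑ i, sgn (σ i)
              * sig s (r^2 - ‖x i - (z + (u : EuclideanSpace ℝ (Fin d)))‖^2))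
          = (2⁻¹:ℝ)^n * (n:ℝ)⁻¹ * ∑ σ : Fin n → Bool, ⨆ u : T, ∑ i, sgn (σ i)
              * sig s (r^2 - ‖x i - (z + (u : EuclideanSpace ℝ (Fin d)))‖^2) := by
        rw [Finset.mul_sum]
        exact Finset.sum_congr rfl fun σ _ => by ring
      rw [hfac]
      have hcard : (Fintype.card (Fin n → Bool) : ℝ) = 2^n := by
        rw [Fintype.card_fun, Fintype.card_bool, Fintype.card_fin]
        norm_num
      have h1 : (2⁻¹:ℝ)^n * (n:ℝ)⁻¹ * ∑ σ : Fin n → Bool, ⨆ u : T, ∑ i, sgn (σ i)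
              * sig s (r^2 - ‖x i - (z + (u : EuclideanSpace ℝ (Fin d)))‖^2)
          ≤ (2⁻¹:ℝ)^n * (n:ℝ)⁻¹
              * ((Fintype.card (Fin n → Bool) : ℝ) * ((8*r/s + 1/r) * r * Real.sqrt n)) := by
        apply mul_le_mul_of_nonneg_left hcore (by positivity)
      refine h1.trans ?_
      rw [hcard]
      have h2 : (2⁻¹:ℝ)^n * (n:ℝ)⁻¹ * ((2:ℝ)^n * ((8*r/s + 1/r) * r * Real.sqrt n))
          = (8*r/s + 1/r) * r * ((n:ℝ)⁻¹ * Real.sqrt n) := by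
        have hpow : (2⁻¹:ℝ)^n * (2:ℝ)^n = 1 := by
          rw [← mul_pow]; norm_num
        calc (2⁻¹:ℝ)^n * (n:ℝ)⁻¹ * ((2:ℝ)^n * ((8*r/s + 1/r) * r * Real.sqrt n))
            = ((2⁻¹:ℝ)^n * (2:ℝ)^n) * ((8*r/s + 1/r) * r * ((n:ℝ)⁻¹ * Real.sqrt n)) := by
              ring
          _ = (8*r/s + 1/r) * r * ((n:ℝ)⁻¹ * Real.sqrt n) := by rw [hpow, one_mul]
      rw [h2]
      apply mul_le_mul_of_nonneg_left _ hC0.le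
      -- n⁻¹ * √n = (√n)⁻¹ ≤ √(d/n)
      have hsn : (0:ℝ) < Real.sqrt n := Real.sqrt_pos.2 hnpos
      have h3 : (n:ℝ)⁻¹ * Real.sqrt n = (Real.sqrt n)⁻¹ := by
        rw [show ((n:ℝ)) = Real.sqrt n * Real.sqrt n from (Real.mul_self_sqrt hnpos.le).symm]
        field_simp
        rw [Real.sqrt_sq hsn.le]
      rw [h3]
      have h4 : Real.sqrt ((d:ℝ)/n) = Real.sqrt d / Real.sqrt n :=
        Real.sqrt_div (by positivity) _
      have h5 : (1:ℝ) ≤ Real.sqrt d := by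
        rw [show (1:ℝ) = Real.sqrt 1 from (Real.sqrt_one).symm]
        exact Real.sqrt_le_sqrt (by exact_mod_cast hdpos)
      rw [h4, le_div_iff₀ hsn, inv_mul_cancel₀ (ne_of_gt hsn)]
      exact h5
    -- outer integral
    unfold radComp
    by_cases hint : Integrable (fun x : Fin n → EuclideanSpace ℝ (Fin d) =>
        ∫ σ : Fin n → Bool,
          (⨆ f : Fz d r s z,
            (n : ℝ)⁻¹ * ∑ i, (if σ i then (1 : ℝ) else -1) * (f : _ → ℝ) (x i))
          ∂(Measure.pi fun _ => signMeasure)) (Measure.pi fun _ => P)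
    · calc ∫ x : Fin n → EuclideanSpace ℝ (Fin d), _ ∂(Measure.pi fun _ => P)
          ≤ ∫ _x : Fin n → EuclideanSpace ℝ (Fin d),
              (8*r/s + 1/r) * r * Real.sqrt ((d:ℝ)/n) ∂(Measure.pi fun _ => P) :=
            integral_mono hint (integrable_const _) hptw
        _ = (8*r/s + 1/r) * r * Real.sqrt ((d:ℝ)/n) := by
            rw [integral_const, measureReal_def, measure_univ, ENNReal.toReal_one, one_smul]
    · rw [integral_undef hint]
      positivity

end mainProof
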